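/- Let B be a self-adjoint operator on a Hilbert space H, and let ω : [0,∞) → [0,∞) be continuous, nondecreasing, with ω(0) = 0 and ω(2t) ≤ c·ω(t) for all t > 0 and some c > 0. Suppose x ∈ H and there is m > 0 such that the best approximation satisfies E_r(x,B) ≤ m·ω(1/r) for all r > 0. Then for every k ≥ 1 there exists c_k > 0 such that ω_k(t, x, B) ≤ c_k · t^k · ∫_t^1 ω(τ)/τ^{k+1} dτ for all 0 < t ≤ 1/2. -/

import Mathlib

open MeasureTheory Complex Set Real intervalIntegral

set_option maxHeartbeats 2000000

private lemma exp_I_norm_le (θ : ℝ) : ‖Complex.exp (Complex.I * θ) - 1‖ ≤ 2 * |θ| := by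
  rcases le_or_gt |θ| 1 with h | h
  · have h2 : ‖Complex.I * θ‖ ≤ 1 := by
      simpa using h
    simpa using Complex.norm_exp_sub_one_le h2
  · have h1 : ‖Complex.exp (Complex.I * θ) - 1‖ ≤ ‖Complex.exp (Complex.I * θ)‖ + 1 := by
      simpa using norm_sub_le (Complex.exp (Complex.I * θ)) 1
    have h2 : ‖Complex.exp (Complex.I * θ)‖ = 1 := by
      rw [mul_comm]
      exact Complex.norm_exp_ofReal_mul_I θ
    nlinarith

private lemma exp_I_norm_le_two (θ : ℝ) : ‖Complex.exp (Complex.I * θ) - 1‖ ≤ 2 := by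
  have h1 : ‖Complex.exp (Complex.I * θ) - 1‖ ≤ ‖Complex.exp (Complex.I * θ)‖ + 1 := by
    simpa using norm_sub_le (Complex.exp (Complex.I * θ)) 1
  have h2 : ‖Complex.exp (Complex.I * θ)‖ = 1 := by
    rw [mul_comm]
    exact Complex.norm_exp_ofReal_mul_I θ
  linarith

/-- cutting off the part of `g` where `|b| ≤ r`. -/
private noncomputable def shellcut {X : Type*} (b : X → ℝ) (g : X → ℂ) (r : ℝ) : X → ℂ :=
  fun s => if |b s| ≤ r then 0 else g s

private lemma shellcut_apply {X : Type*} (b : X → ℝ) (g : X → ℂ) (r : ℝ) (s : X) :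
    shellcut b g r s = if |b s| ≤ r then 0 else g s := rfl

private lemma shellcut_aesm {X : Type*} [MeasurableSpace X] {μ : Measure X}
    {b : X → ℝ} (hb : Measurable b) {g : X → ℂ} (hg : AEStronglyMeasurable g μ) (r : ℝ) :
    AEStronglyMeasurable (shellcut b g r) μ := by
  have : shellcut b g r = Set.indicator {s | |b s| ≤ r}ᶜ g := by
    funext s
    by_cases hs : |b s| ≤ r <;> simp [shellcut, Set.indicator, hs]
  rw [this]
  exact hg.indicator (measurableSet_le hb.abs measurable_const).compl

private lemma eLpNorm_le_of_bound {X : Type*} [MeasurableSpace X] (μ : Measure X)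
    (g1 g2 : X → ℂ) (C : ℝ) (hC : 0 ≤ C) (hpt : ∀ s, ‖g1 s‖ ≤ C * ‖g2 s‖) :
    eLpNorm g1 2 μ ≤ ENNReal.ofReal C * eLpNorm g2 2 μ := by
  have h1 : eLpNorm g1 2 μ ≤ eLpNorm ((C : ℂ) • g2) 2 μ := by
    apply eLpNorm_mono
    intro s
    have : ‖((C : ℂ) • g2) s‖ = C * ‖g2 s‖ := by
      rw [Pi.smul_apply, norm_smul, Complex.norm_real, Real.norm_eq_abs, _root_.abs_of_nonneg hC]
    rw [this]
    exact hpt s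
  refine h1.trans (le_of_eq ?_)
  rw [eLpNorm_const_smul]
  congr 1
  rw [← ofReal_norm, Complex.norm_real, Real.norm_eq_abs, _root_.abs_of_nonneg hC]

/-- Inverse theorem, Lemma (Lemma 3).  `B` is realized as multiplication by the measurable
function `b` on `L²(μ)`; `E_r(x,B) = ‖x - E([-r,r])x‖` is the norm of `x` restricted to
`{|b| > r}` and `ω_k(t,x,B) = sup_{0<τ≤t} ‖(e^{iτB}-I)^k x‖`.  If `ω` is a modulus of
continuity with the doubling property and `E_r(x,B) ≤ m·ω(1/r)` for all `r > 0`, then for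
every `k ≥ 1` there is `c_k > 0` with
`ω_k(t,x,B) ≤ c_k · t^k · ∫_t^1 ω(τ)/τ^{k+1} dτ` for all `0 < t ≤ 1/2`. -/
theorem inverse_lemma {X : Type*} [MeasurableSpace X] (μ : Measure X)
    (b : X → ℝ) (hb : Measurable b)
    (ω : ℝ → ℝ) (hωcont : ContinuousOn ω (Ici (0 : ℝ)))
    (hωmono : MonotoneOn ω (Ici (0 : ℝ))) (hωzero : ω 0 = 0)
    (hωnonneg : ∀ t, 0 ≤ t → 0 ≤ ω t)
    (c : ℝ) (hc : 0 < c) (hωdoubling : ∀ t > (0 : ℝ), ω (2 * t) ≤ c * ω t)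
    (x : X → ℂ) (hx : MemLp x 2 μ)
    (m : ℝ) (hm : 0 < m)
    (happrox : ∀ r > (0 : ℝ),
      eLpNorm (fun s => if |b s| ≤ r then 0 else x s) 2 μ ≤ ENNReal.ofReal (m * ω (1 / r)))
    (k : ℕ) (hk : 1 ≤ k) :
    ∃ ck > (0 : ℝ), ∀ t : ℝ, 0 < t → t ≤ 1 / 2 →
      (⨆ τ ∈ Ioc (0 : ℝ) t,
          eLpNorm (fun s => (Complex.exp (Complex.I * τ * b s) - 1) ^ k * x s) 2 μ)
        ≤ ENNReal.ofReal (ck * t ^ k * ∫ τ in t..1, ω τ / τ ^ (k + 1)) := by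
  have hk0 : k ≠ 0 := by omega
  rcases eq_or_lt_of_le (hωnonneg (1 / 2) (by norm_num)) with hdeg | hpos
  · -- degenerate case : ω (1/2) = 0 forces ω ≡ 0 on (0,∞) and then x = 0 a.e. off {b = 0}
    have hω0 : ∀ r : ℝ, 0 < r → ω r = 0 := by
      have key : ∀ n : ℕ, ∀ r : ℝ, 0 < r → r ≤ 2 ^ n * (1 / 2) → ω r = 0 := by
        intro n
        induction n with
        | zero =>
          intro r hr hr2
          refine le_antisymm ?_ (hωnonneg r hr.le)
          have h1 := hωmono (mem_Ici.mpr hr.le) (mem_Ici.mpr (by norm_num : (0:ℝ) ≤ 1/2))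
            (by simpa using hr2)
          linarith [hdeg]
        | succ n ih =>
          intro r hr hr2
          rcases le_or_gt r (2 ^ n * (1 / 2)) with h | h
          · exact ih r hr h
          · have hhalf : ω (r / 2) = 0 := by
              apply ih (r / 2) (by positivity)
              rw [pow_succ] at hr2
              linarith
            have hd := hωdoubling (r / 2) (by positivity)
            rw [show 2 * (r / 2) = r by ring, hhalf, mul_zero] at hd
            exact le_antisymm hd (hωnonneg r hr.le)
      intro r hr
      obtain ⟨n, hn⟩ := pow_unbounded_of_one_lt (2 * r) (by norm_num : (1:ℝ) < 2)
      exact key n r hr (by linarith)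
    have hx0 : ∀ᵐ s ∂μ, ∀ n : ℕ, (if |b s| ≤ 1 / ((n : ℝ) + 1) then 0 else x s) = 0 := by
      rw [ae_all_iff]
      intro n
      have hr : (0:ℝ) < 1 / ((n : ℝ) + 1) := by positivity
      have h1 := happrox _ hr
      rw [show ω (1 / (1 / ((n : ℝ) + 1))) = 0 by
        rw [one_div_one_div]; exact hω0 _ (by positivity), mul_zero, ENNReal.ofReal_zero] at h1
      have h2 : eLpNorm (fun s => if |b s| ≤ 1 / ((n : ℝ) + 1) then 0 else x s) 2 μ = 0 :=
        le_antisymm h1 zero_le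
      have h3 := (eLpNorm_eq_zero_iff (shellcut_aesm hb hx.1 (1 / ((n : ℝ) + 1)))
        (by norm_num)).mp h2
      exact h3
    refine ⟨1, one_pos, fun t ht ht2 => ?_⟩
    apply iSup₂_le
    intro τ hτ
    have hf0 : (fun s => (Complex.exp (Complex.I * τ * b s) - 1) ^ k * x s) =ᵐ[μ]
        (0 : X → ℂ) := by
      filter_upwards [hx0] with s hs
      by_cases hbs : b s = 0
      · simp [hbs, zero_pow hk0]
      · obtain ⟨n, hn⟩ := exists_nat_one_div_lt (abs_pos.mpr hbs)
        have h1 := hs n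
        rw [if_neg (not_le.mpr (by exact_mod_cast hn))] at h1
        simp [h1]
    rw [eLpNorm_congr_ae hf0, eLpNorm_zero]
    exact zero_le
  · -- main case : ω (1/2) > 0
    set Mx : ℝ := (eLpNorm x 2 μ).toReal with hMxdef
    have hMx0 : (0:ℝ) ≤ Mx := ENNReal.toReal_nonneg
    have hxM : eLpNorm x 2 μ ≤ ENNReal.ofReal Mx :=
      le_of_eq (ENNReal.ofReal_toReal hx.2.ne).symm
    set g : ℝ → ℝ := fun τ => ω τ / τ ^ (k + 1) with hgdef
    have hgnn : ∀ u : ℝ, 0 ≤ u → 0 ≤ g u := fun u hu =>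
      div_nonneg (hωnonneg u hu) (by positivity)
    have hgint : ∀ a d : ℝ, 0 < a → a ≤ d → IntervalIntegrable g volume a d := by
      intro a d ha had
      apply ContinuousOn.intervalIntegrable
      rw [uIcc_of_le had]
      apply ContinuousOn.div
      · exact hωcont.mono (fun u hu => le_trans ha.le hu.1)
      · exact (continuous_pow (k + 1)).continuousOn
      · intro u hu
        exact pow_ne_zero _ (ne_of_gt (lt_of_lt_of_le ha hu.1))
    have hlowint : ∀ a d : ℝ, 0 < a → a ≤ d →
        (d - a) * (ω a / d ^ (k + 1)) ≤ ∫ τ in a..d, g τ := by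
      intro a d ha had
      have hconst : (∫ _ in a..d, (ω a / d ^ (k + 1))) = (d - a) * (ω a / d ^ (k + 1)) := by
        rw [intervalIntegral.integral_const, smul_eq_mul]
      rw [← hconst]
      apply intervalIntegral.integral_mono_on had (intervalIntegrable_const) (hgint a d ha had)
      intro u hu
      have hu0 : 0 < u := lt_of_lt_of_le ha hu.1
      apply div_le_div₀ (hωnonneg u hu0.le)
        (hωmono (mem_Ici.mpr ha.le) (mem_Ici.mpr hu0.le) hu.1) (by positivity)
      exact pow_le_pow_left₀ hu0.le hu.2 _
    have hextR : ∀ a d e : ℝ, 0 < a → a ≤ d → d ≤ e →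
        (∫ τ in d..e, g τ) ≤ ∫ τ in a..e, g τ := by
      intro a d e ha had hde
      rw [← intervalIntegral.integral_add_adjacent_intervals (hgint a d ha had)
        (hgint d e (lt_of_lt_of_le ha had) hde)]
      have h0 : 0 ≤ ∫ τ in a..d, g τ :=
        intervalIntegral.integral_nonneg had (fun u hu => hgnn u (le_trans ha.le hu.1))
      linarith
    have hextL : ∀ a d e : ℝ, 0 < a → a ≤ d → d ≤ e →
        (∫ τ in a..d, g τ) ≤ ∫ τ in a..e, g τ := by
      intro a d e ha had hde
      rw [← intervalIntegral.integral_add_adjacent_intervals (hgint a d ha had)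
        (hgint d e (lt_of_lt_of_le ha had) hde)]
      have h0 : 0 ≤ ∫ τ in d..e, g τ :=
        intervalIntegral.integral_nonneg hde
          (fun u hu => hgnn u (le_trans (le_trans ha.le had) hu.1))
      linarith
    set A : ℝ := ∫ τ in (1/2 : ℝ)..1, g τ with hAdef
    have hA : 0 < A := by
      have h1 := hlowint (1/2) 1 (by norm_num) (by norm_num)
      have h2 : ((1:ℝ) - 1/2) * (ω (1/2) / (1:ℝ) ^ (k + 1)) = ω (1/2) / 2 := by
        rw [one_pow]; ring
      rw [h2] at h1
      have h3 : (0:ℝ) < ω (1/2) / 2 := by linarith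
      exact lt_of_lt_of_le h3 h1
    refine ⟨2 ^ k * Mx / A + 2 ^ (2 * k) * m * (2 * c) + 2 ^ k * m * c * 2 ^ (k + 1), ?_, ?_⟩
    · have h1 : (0:ℝ) ≤ 2 ^ k * Mx / A := div_nonneg (by positivity) hA.le
      have h2 : (0:ℝ) < 2 ^ (2 * k) * m * (2 * c) := by positivity
      have h3 : (0:ℝ) < 2 ^ k * m * c * 2 ^ (k + 1) := by positivity
      linarith
    intro t ht ht2
    set Itg : ℝ := ∫ τ in t..1, g τ with hItgdef
    have h2t : 2 * t ≤ 1 := by linarith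
    have hAI : A ≤ Itg := hextR t (1/2) 1 ht (by linarith) (by norm_num)
    have hωt : ω t ≤ 2 ^ (k + 1) * t ^ k * Itg := by
      have h1 := hlowint t (2 * t) ht (by linarith)
      have h2 : (∫ τ in t..(2*t), g τ) ≤ Itg := hextL t (2 * t) 1 ht (by linarith) h2t
      have h3 : (2 * t - t) * (ω t / (2 * t) ^ (k + 1)) = ω t / (2 ^ (k + 1) * t ^ k) := by
        rw [mul_pow, pow_succ t k]
        have ht' : t ≠ 0 := ne_of_gt ht
        field_simp
        ring
      rw [h3] at h1
      have h4 : (0:ℝ) < 2 ^ (k + 1) * t ^ k := by positivity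
      have h5 := (div_le_iff₀ h4).mp (h1.trans h2)
      calc ω t ≤ Itg * (2 ^ (k + 1) * t ^ k) := h5
        _ = 2 ^ (k + 1) * t ^ k * Itg := by ring
    -- the dyadic index N with 2^N ≤ 1/t < 2^(N+1)
    have hti : (2:ℝ) ≤ 1 / t := by rw [le_div_iff₀ ht]; linarith
    have hn2 : 2 ≤ ⌊1 / t⌋₊ := Nat.le_floor (by exact_mod_cast hti)
    set N := Nat.log 2 ⌊1 / t⌋₊ with hNdef
    have hN1 : (2:ℝ) ^ N ≤ 1 / t := by
      calc (2:ℝ) ^ N = ((2 ^ N : ℕ) : ℝ) := by push_cast; ring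
        _ ≤ (⌊1 / t⌋₊ : ℝ) := by exact_mod_cast Nat.pow_log_le_self 2 (by omega)
        _ ≤ 1 / t := Nat.floor_le (by positivity)
    have hN2 : 1 / t < (2:ℝ) ^ (N + 1) := by
      have h1 : (1:ℝ) / t < ⌊1 / t⌋₊ + 1 := Nat.lt_floor_add_one _
      have h2 : ⌊1 / t⌋₊ + 1 ≤ 2 ^ (N + 1) := Nat.lt_pow_succ_log_self (by norm_num) _
      calc 1 / t < (⌊1 / t⌋₊ : ℝ) + 1 := h1
        _ ≤ ((2 ^ (N + 1) : ℕ) : ℝ) := by exact_mod_cast h2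
        _ = 2 ^ (N + 1) := by push_cast; ring
    have htN : t ≤ 1 / 2 ^ N := by
      rw [le_div_iff₀ (by positivity : (0:ℝ) < 2 ^ N)]
      have := (le_div_iff₀ ht).mp hN1
      linarith
    have htN2 : 1 / 2 ^ N ≤ 2 * t := by
      rw [div_le_iff₀ (by positivity : (0:ℝ) < 2 ^ N)]
      have h1 := (div_lt_iff₀ ht).mp hN2
      have h2 : (2:ℝ) ^ (N + 1) * t = 2 * t * 2 ^ N := by rw [pow_succ]; ring
      nlinarith
    -- dyadic sum bound
    have hshell : (∑ j ∈ Finset.range N, 2 ^ (j * k) * ω (1 / 2 ^ j)) ≤ 2 * c * Itg := by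
      have htele : (∑ j ∈ Finset.range N, ∫ τ in (1/2^(j+1) : ℝ)..(1/2^j : ℝ), g τ)
          = ∫ τ in (1/2^N : ℝ)..1, g τ := by
        have hint : ∀ i, i < N → IntervalIntegrable g volume ((1:ℝ)/2^i) ((1:ℝ)/2^(i+1)) := by
          intro i _
          exact (hgint (1/2^(i+1)) (1/2^i) (by positivity)
            (by apply one_div_le_one_div_of_le (by positivity)
                exact pow_le_pow_right₀ (by norm_num) (Nat.le_succ i))).symm
        have h := intervalIntegral.sum_integral_adjacent_intervals
          (a := fun i => (1/2^i : ℝ)) (μ := volume) (f := g) hint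
        calc (∑ j ∈ Finset.range N, ∫ τ in (1/2^(j+1) : ℝ)..(1/2^j : ℝ), g τ)
            = ∑ j ∈ Finset.range N, -∫ τ in (1/2^j : ℝ)..(1/2^(j+1) : ℝ), g τ :=
              Finset.sum_congr rfl (fun j _ => intervalIntegral.integral_symm _ _)
          _ = -∑ j ∈ Finset.range N, ∫ τ in (1/2^j : ℝ)..(1/2^(j+1) : ℝ), g τ := by
              rw [Finset.sum_neg_distrib]
          _ = -∫ τ in ((1:ℝ)/2^0)..(1/2^N : ℝ), g τ := by rw [h]
          _ = ∫ τ in (1/2^N : ℝ)..((1:ℝ)/2^0), g τ := (intervalIntegral.integral_symm _ _).symm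
          _ = ∫ τ in (1/2^N : ℝ)..1, g τ := by norm_num
      have hper : ∀ j ∈ Finset.range N,
          2 ^ (j * k) * ω (1 / 2 ^ j) ≤ 2 * c * ∫ τ in (1/2^(j+1) : ℝ)..(1/2^j : ℝ), g τ := by
        intro j _
        have hp1 : (0:ℝ) < 1 / 2 ^ (j + 1) := by positivity
        have hdb : ω (1 / 2 ^ j) ≤ c * ω (1 / 2 ^ (j + 1)) := by
          have h := hωdoubling (1 / 2 ^ (j + 1)) hp1
          rw [show (2:ℝ) * (1 / 2 ^ (j + 1)) = 1 / 2 ^ j by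
            rw [pow_succ]; field_simp] at h
          exact h
        have hle : (1:ℝ) / 2 ^ (j + 1) ≤ 1 / 2 ^ j := by
          apply one_div_le_one_div_of_le (by positivity)
          exact pow_le_pow_right₀ (by norm_num) (Nat.le_succ j)
        have hilow := hlowint (1 / 2 ^ (j + 1)) (1 / 2 ^ j) hp1 hle
        have heq : ((1:ℝ) / 2 ^ j - 1 / 2 ^ (j + 1)) * (ω (1 / 2 ^ (j + 1)) / ((1:ℝ)/2^j) ^ (k+1))
            = 2 ^ (j * k) / 2 * ω (1 / 2 ^ (j + 1)) := by
          have e1 : ((1:ℝ)/2^j) ^ (k+1) = 1 / 2 ^ (j * (k + 1)) := by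
            rw [div_pow, one_pow, ← pow_mul]
          have e2 : (2:ℝ) ^ (j * (k + 1)) = 2 ^ (j * k) * 2 ^ j := by
            rw [← pow_add]; ring_nf
          have e3 : (2:ℝ) ^ (j + 1) = 2 ^ j * 2 := by rw [pow_succ]
          rw [e1, e2, e3]
          field_simp
          ring
        rw [heq] at hilow
        have hp2 : (0:ℝ) ≤ 2 ^ (j * k) := by positivity
        have s1 : (2:ℝ) ^ (j * k) * ω (1 / 2 ^ j) ≤ 2 ^ (j * k) * (c * ω (1 / 2 ^ (j + 1))) :=
          mul_le_mul_of_nonneg_left hdb hp2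
        have s2 : 2 * c * (2 ^ (j * k) / 2 * ω (1 / 2 ^ (j + 1)))
            ≤ 2 * c * ∫ τ in (1/2^(j+1) : ℝ)..(1/2^j : ℝ), g τ :=
          mul_le_mul_of_nonneg_left hilow (by positivity)
        nlinarith [s1, s2]
      calc (∑ j ∈ Finset.range N, 2 ^ (j * k) * ω (1 / 2 ^ j))
          ≤ ∑ j ∈ Finset.range N, 2 * c * ∫ τ in (1/2^(j+1) : ℝ)..(1/2^j : ℝ), g τ :=
            Finset.sum_le_sum hper
        _ = 2 * c * ∑ j ∈ Finset.range N, ∫ τ in (1/2^(j+1) : ℝ)..(1/2^j : ℝ), g τ := by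
            rw [Finset.mul_sum]
        _ = 2 * c * ∫ τ in (1/2^N : ℝ)..1, g τ := by rw [htele]
        _ ≤ 2 * c * Itg := by
            apply mul_le_mul_of_nonneg_left _ (by positivity : (0:ℝ) ≤ 2 * c)
            apply hextR t (1/2^N) 1 ht htN
            calc (1:ℝ)/2^N ≤ 2 * t := htN2
              _ ≤ 1 := h2t
    -- now bound eLpNorm for each τ
    apply iSup₂_le
    intro τ hτ
    obtain ⟨hτ0, hτt⟩ := hτ
    set f : X → ℂ := fun s => (Complex.exp (Complex.I * τ * b s) - 1) ^ k * x s with hfdef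
    have hfm : AEStronglyMeasurable f μ := by
      apply AEStronglyMeasurable.mul _ hx.1
      apply Measurable.aestronglyMeasurable
      exact ((Complex.measurable_exp.comp
        ((measurable_const.mul (Complex.measurable_ofReal.comp hb)))).sub
          measurable_const).pow_const k
    -- pointwise bounds
    have hnormf : ∀ s, ‖f s‖ = ‖Complex.exp (Complex.I * τ * b s) - 1‖ ^ k * ‖x s‖ := by
      intro s
      rw [hfdef]
      simp [norm_mul, norm_pow]
    have harg : ∀ s, Complex.I * τ * (b s : ℂ) = Complex.I * ((τ * b s : ℝ) : ℂ) := by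
      intro s
      push_cast
      ring
    have hfb2 : ∀ s, ‖f s‖ ≤ 2 ^ k * ‖x s‖ := by
      intro s
      rw [hnormf s]
      apply mul_le_mul_of_nonneg_right _ (norm_nonneg _)
      apply pow_le_pow_left₀ (norm_nonneg _)
      rw [harg s]
      exact exp_I_norm_le_two _
    have hfbθ : ∀ s, ‖f s‖ ≤ (2 * (τ * |b s|)) ^ k * ‖x s‖ := by
      intro s
      rw [hnormf s]
      apply mul_le_mul_of_nonneg_right _ (norm_nonneg _)
      apply pow_le_pow_left₀ (norm_nonneg _)
      rw [harg s]
      calc ‖Complex.exp (Complex.I * ((τ * b s : ℝ) : ℂ)) - 1‖ ≤ 2 * |τ * b s| :=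
            exp_I_norm_le _
        _ = 2 * (τ * |b s|) := by rw [abs_mul, abs_of_pos hτ0]
    -- the three pieces
    have hlowpiece : eLpNorm (f - shellcut b f (2 ^ (0:ℕ))) 2 μ
        ≤ ENNReal.ofReal (2 ^ k * t ^ k * Mx) := by
      have h1 : eLpNorm (f - shellcut b f (2 ^ (0:ℕ))) 2 μ
          ≤ ENNReal.ofReal (2 ^ k * t ^ k) * eLpNorm x 2 μ := by
        apply eLpNorm_le_of_bound μ _ _ _ (by positivity)
        intro s
        by_cases hs : |b s| ≤ (2:ℝ) ^ (0:ℕ)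
        · have h0 : (f - shellcut b f (2 ^ (0:ℕ))) s = f s := by
            simp only [Pi.sub_apply, shellcut_apply, if_pos hs, sub_zero]
          rw [h0]
          calc ‖f s‖ ≤ (2 * (τ * |b s|)) ^ k * ‖x s‖ := hfbθ s
            _ ≤ 2 ^ k * t ^ k * ‖x s‖ := by
                apply mul_le_mul_of_nonneg_right _ (norm_nonneg _)
                rw [← mul_pow]
                apply pow_le_pow_left₀ (by positivity)
                have hbs1 : |b s| ≤ 1 := by simpa using hs
                have : τ * |b s| ≤ t := by
                  calc τ * |b s| ≤ t * 1 := by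
                        apply mul_le_mul hτt hbs1 (abs_nonneg _) ht.le
                    _ = t := mul_one t
                linarith
        · have h0 : (f - shellcut b f (2 ^ (0:ℕ))) s = 0 := by
            simp only [Pi.sub_apply, shellcut_apply, if_neg hs, sub_self]
          rw [h0, norm_zero]
          positivity
      refine h1.trans ?_
      calc ENNReal.ofReal (2 ^ k * t ^ k) * eLpNorm x 2 μ
          ≤ ENNReal.ofReal (2 ^ k * t ^ k) * ENNReal.ofReal Mx := mul_le_mul_right hxM _
        _ = ENNReal.ofReal (2 ^ k * t ^ k * Mx) := (ENNReal.ofReal_mul (by positivity)).symm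
    have hshellpiece : ∀ j : ℕ, eLpNorm (shellcut b f (2 ^ j) - shellcut b f (2 ^ (j+1))) 2 μ
        ≤ ENNReal.ofReal ((2 * (t * 2 ^ (j+1))) ^ k * (m * ω (1 / 2 ^ j))) := by
      intro j
      have h1 : eLpNorm (shellcut b f (2 ^ j) - shellcut b f (2 ^ (j+1))) 2 μ
          ≤ ENNReal.ofReal ((2 * (t * 2 ^ (j+1))) ^ k)
            * eLpNorm (fun s => if |b s| ≤ (2:ℝ) ^ j then 0 else x s) 2 μ := by
        apply eLpNorm_le_of_bound μ _ _ _ (by positivity)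
        intro s
        by_cases hs1 : |b s| ≤ (2:ℝ) ^ j
        · have hs2 : |b s| ≤ (2:ℝ) ^ (j+1) :=
            hs1.trans (pow_le_pow_right₀ (by norm_num) (Nat.le_succ j))
          simp [Pi.sub_apply, shellcut_apply, hs1, hs2]
        · by_cases hs2 : |b s| ≤ (2:ℝ) ^ (j+1)
          · simp only [Pi.sub_apply, shellcut_apply, if_neg hs1, if_pos hs2, sub_zero]
            calc ‖f s‖ ≤ (2 * (τ * |b s|)) ^ k * ‖x s‖ := hfbθ s
              _ ≤ (2 * (t * 2 ^ (j+1))) ^ k * ‖x s‖ := by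
                  apply mul_le_mul_of_nonneg_right _ (norm_nonneg _)
                  apply pow_le_pow_left₀ (by positivity)
                  have : τ * |b s| ≤ t * 2 ^ (j+1) :=
                    mul_le_mul hτt hs2 (abs_nonneg _) ht.le
                  linarith
          · simp only [Pi.sub_apply, shellcut_apply, if_neg hs1, if_neg hs2, sub_self, norm_zero]
            positivity
      refine h1.trans ?_
      calc ENNReal.ofReal ((2 * (t * 2 ^ (j+1))) ^ k)
            * eLpNorm (fun s => if |b s| ≤ (2:ℝ) ^ j then 0 else x s) 2 μ
          ≤ ENNReal.ofReal ((2 * (t * 2 ^ (j+1))) ^ k) * ENNReal.ofReal (m * ω (1 / 2 ^ j)) :=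
            mul_le_mul_right (happrox _ (by positivity)) _
        _ = ENNReal.ofReal ((2 * (t * 2 ^ (j+1))) ^ k * (m * ω (1 / 2 ^ j))) :=
            (ENNReal.ofReal_mul (by positivity)).symm
    have hhighpiece : eLpNorm (shellcut b f (2 ^ N)) 2 μ
        ≤ ENNReal.ofReal (2 ^ k * (m * ω (1 / 2 ^ N))) := by
      have h1 : eLpNorm (shellcut b f (2 ^ N)) 2 μ
          ≤ ENNReal.ofReal ((2:ℝ) ^ k)
            * eLpNorm (fun s => if |b s| ≤ (2:ℝ) ^ N then 0 else x s) 2 μ := by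
        apply eLpNorm_le_of_bound μ _ _ _ (by positivity)
        intro s
        by_cases hs : |b s| ≤ (2:ℝ) ^ N
        · simp [shellcut_apply, hs]
        · simp only [shellcut_apply, if_neg hs]
          exact hfb2 s
      refine h1.trans ?_
      calc ENNReal.ofReal ((2:ℝ) ^ k)
            * eLpNorm (fun s => if |b s| ≤ (2:ℝ) ^ N then 0 else x s) 2 μ
          ≤ ENNReal.ofReal ((2:ℝ) ^ k) * ENNReal.ofReal (m * ω (1 / 2 ^ N)) :=
            mul_le_mul_right (happrox _ (by positivity)) _
        _ = ENNReal.ofReal (2 ^ k * (m * ω (1 / 2 ^ N))) :=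
            (ENNReal.ofReal_mul (by positivity)).symm
    -- decomposition
    have htel : (∑ j ∈ Finset.range N, (shellcut b f (2 ^ j) - shellcut b f (2 ^ (j+1))))
        = shellcut b f (2 ^ (0:ℕ)) - shellcut b f (2 ^ N) :=
      Finset.sum_range_sub' (fun j => shellcut b f (2 ^ j)) N
    have hdecomp : f = (f - shellcut b f (2 ^ (0:ℕ)))
        + (∑ j ∈ Finset.range N, (shellcut b f (2 ^ j) - shellcut b f (2 ^ (j+1))))
        + shellcut b f (2 ^ N) := by
      rw [htel]
      abel
    have haesum : AEStronglyMeasurable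
        (∑ j ∈ Finset.range N, (shellcut b f (2 ^ j) - shellcut b f (2 ^ (j+1)))) μ :=
      Finset.aestronglyMeasurable_sum _ (fun j _ =>
        (shellcut_aesm hb hfm _).sub (shellcut_aesm hb hfm _))
    -- combine
    have hcomb : eLpNorm f 2 μ ≤ ENNReal.ofReal (2 ^ k * t ^ k * Mx)
        + ENNReal.ofReal (∑ j ∈ Finset.range N, (2 * (t * 2 ^ (j+1))) ^ k * (m * ω (1 / 2 ^ j)))
        + ENNReal.ofReal (2 ^ k * (m * ω (1 / 2 ^ N))) := by
      calc eLpNorm f 2 μ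
          = eLpNorm ((f - shellcut b f (2 ^ (0:ℕ)))
              + (∑ j ∈ Finset.range N, (shellcut b f (2 ^ j) - shellcut b f (2 ^ (j+1))))
              + shellcut b f (2 ^ N)) 2 μ := by rw [← hdecomp]
        _ ≤ eLpNorm ((f - shellcut b f (2 ^ (0:ℕ)))
              + (∑ j ∈ Finset.range N, (shellcut b f (2 ^ j) - shellcut b f (2 ^ (j+1))))) 2 μ
            + eLpNorm (shellcut b f (2 ^ N)) 2 μ :=
            eLpNorm_add_le ((hfm.sub (shellcut_aesm hb hfm _)).add haesum)
              (shellcut_aesm hb hfm _) one_le_two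
        _ ≤ (eLpNorm (f - shellcut b f (2 ^ (0:ℕ))) 2 μ
              + eLpNorm (∑ j ∈ Finset.range N,
                  (shellcut b f (2 ^ j) - shellcut b f (2 ^ (j+1)))) 2 μ)
            + eLpNorm (shellcut b f (2 ^ N)) 2 μ :=
            add_le_add_left (eLpNorm_add_le (hfm.sub (shellcut_aesm hb hfm _)) haesum
              one_le_two) _
        _ ≤ (eLpNorm (f - shellcut b f (2 ^ (0:ℕ))) 2 μ
              + ∑ j ∈ Finset.range N,
                  eLpNorm (shellcut b f (2 ^ j) - shellcut b f (2 ^ (j+1))) 2 μ)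
            + eLpNorm (shellcut b f (2 ^ N)) 2 μ := by
            apply add_le_add_left
            apply add_le_add_right
            exact eLpNorm_sum_le (fun j _ =>
              (shellcut_aesm hb hfm _).sub (shellcut_aesm hb hfm _)) one_le_two
        _ ≤ (ENNReal.ofReal (2 ^ k * t ^ k * Mx)
              + ∑ j ∈ Finset.range N,
                  ENNReal.ofReal ((2 * (t * 2 ^ (j+1))) ^ k * (m * ω (1 / 2 ^ j))))
            + ENNReal.ofReal (2 ^ k * (m * ω (1 / 2 ^ N))) :=
            add_le_add (add_le_add hlowpiece
              (Finset.sum_le_sum (fun j _ => hshellpiece j))) hhighpiece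
        _ = ENNReal.ofReal (2 ^ k * t ^ k * Mx)
              + ENNReal.ofReal
                  (∑ j ∈ Finset.range N, (2 * (t * 2 ^ (j+1))) ^ k * (m * ω (1 / 2 ^ j)))
            + ENNReal.ofReal (2 ^ k * (m * ω (1 / 2 ^ N))) := by
            rw [ENNReal.ofReal_sum_of_nonneg (fun j _ => by
              have := hωnonneg (1 / 2 ^ j) (by positivity)
              positivity)]
    -- the real estimate
    have hreal : 2 ^ k * t ^ k * Mx
        + (∑ j ∈ Finset.range N, (2 * (t * 2 ^ (j+1))) ^ k * (m * ω (1 / 2 ^ j)))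
        + 2 ^ k * (m * ω (1 / 2 ^ N))
        ≤ (2 ^ k * Mx / A + 2 ^ (2 * k) * m * (2 * c) + 2 ^ k * m * c * 2 ^ (k + 1))
            * t ^ k * Itg := by
      have hItgnn : 0 ≤ Itg := le_trans hA.le hAI
      have hlowR : 2 ^ k * t ^ k * Mx ≤ (2 ^ k * Mx / A) * t ^ k * Itg := by
        have e : 2 ^ k * t ^ k * Mx = (2 ^ k * Mx / A) * t ^ k * A := by
          field_simp
        rw [e]
        apply mul_le_mul_of_nonneg_left hAI
        exact mul_nonneg (div_nonneg (by positivity) hA.le) (by positivity)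
      have hshellR : (∑ j ∈ Finset.range N, (2 * (t * 2 ^ (j+1))) ^ k * (m * ω (1 / 2 ^ j)))
          ≤ 2 ^ (2 * k) * m * (2 * c) * t ^ k * Itg := by
        have e : ∀ j : ℕ, (2 * (t * 2 ^ (j+1))) ^ k * (m * ω (1 / 2 ^ j))
            = (2 ^ (2 * k) * t ^ k * m) * (2 ^ (j * k) * ω (1 / 2 ^ j)) := by
          intro j
          have e1 : (2:ℝ) * (t * 2 ^ (j+1)) = 2 ^ 2 * t * 2 ^ j := by
            rw [pow_succ]; ring
          rw [e1, mul_pow, mul_pow, ← pow_mul, ← pow_mul]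
          ring_nf
        calc (∑ j ∈ Finset.range N, (2 * (t * 2 ^ (j+1))) ^ k * (m * ω (1 / 2 ^ j)))
            = (2 ^ (2 * k) * t ^ k * m) * ∑ j ∈ Finset.range N, 2 ^ (j * k) * ω (1 / 2 ^ j) := by
              rw [Finset.mul_sum]
              exact Finset.sum_congr rfl (fun j _ => e j)
          _ ≤ (2 ^ (2 * k) * t ^ k * m) * (2 * c * Itg) :=
              mul_le_mul_of_nonneg_left hshell (by positivity)
          _ = 2 ^ (2 * k) * m * (2 * c) * t ^ k * Itg := by ring
      have hhighR : 2 ^ k * (m * ω (1 / 2 ^ N)) ≤ 2 ^ k * m * c * 2 ^ (k + 1) * t ^ k * Itg := by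
        have h1 : ω (1 / 2 ^ N) ≤ ω (2 * t) :=
          hωmono (mem_Ici.mpr (by positivity)) (mem_Ici.mpr (by positivity)) htN2
        have h2 : ω (2 * t) ≤ c * ω t := hωdoubling t ht
        have h3 : ω (1 / 2 ^ N) ≤ c * (2 ^ (k + 1) * t ^ k * Itg) := by
          calc ω (1 / 2 ^ N) ≤ ω (2 * t) := h1
            _ ≤ c * ω t := h2
            _ ≤ c * (2 ^ (k + 1) * t ^ k * Itg) := mul_le_mul_of_nonneg_left hωt hc.le
        calc 2 ^ k * (m * ω (1 / 2 ^ N)) ≤ 2 ^ k * (m * (c * (2 ^ (k + 1) * t ^ k * Itg))) := by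
              apply mul_le_mul_of_nonneg_left _ (by positivity)
              exact mul_le_mul_of_nonneg_left h3 hm.le
          _ = 2 ^ k * m * c * 2 ^ (k + 1) * t ^ k * Itg := by ring
      nlinarith [hlowR, hshellR, hhighR]
    have hl_nn : (0:ℝ) ≤ 2 ^ k * t ^ k * Mx := by positivity
    have hs_nn : (0:ℝ) ≤ ∑ j ∈ Finset.range N, (2 * (t * 2 ^ (j+1))) ^ k * (m * ω (1 / 2 ^ j)) :=
      Finset.sum_nonneg (fun j _ => by
        have := hωnonneg (1 / 2 ^ j) (by positivity); positivity)
    have hh_nn : (0:ℝ) ≤ 2 ^ k * (m * ω (1 / 2 ^ N)) := by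
      have := hωnonneg (1 / 2 ^ N) (by positivity); positivity
    refine hcomb.trans ?_
    rw [← ENNReal.ofReal_add hl_nn hs_nn, ← ENNReal.ofReal_add (add_nonneg hl_nn hs_nn) hh_nn]
    exact ENNReal.ofReal_le_ofReal hreal
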